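/- Let X = (I,P) be a probabilistic coherence space and let x ∈ P. Define I_x = {a ∈ I | ∃ε>0, x + ε·e_a ∈ P} (where e_a is the indicator vector of a) and P_x = {u ∈ [0,∞)^{I_x} | x + u ∈ P}, where u is extended by 0 on I∖I_x. Then (I_x, P_x) is a probabilistic coherence space, called the local PCS of X at x. Moreover, every u ∈ [0,∞)^I with x + u ∈ P vanishes outside I_x. -/

import Mathlib

open scoped ENNReal NNReal

noncomputable section

/-- ⟨u,u'⟩ = Σ_i u_i u'_i in [0,∞]. -/
def dotE {I : Type*} (u v : I → ℝ≥0∞) : ℝ≥0∞ := ∑' i, u i * v i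

/-- The orthogonal P⊥ of a set P ⊆ [0,∞]^I. -/
def orthE {I : Type*} (P : Set (I → ℝ≥0∞)) : Set (I → ℝ≥0∞) :=
  {v | ∀ u ∈ P, dotE u v ≤ 1}

/-- (I,P) is a probabilistic coherence space. -/
structure IsPCS {I : Type*} (P : Set (I → ℝ≥0∞)) : Prop where
  biorth : orthE (orthE P) = P
  nonzero : ∀ a, ∃ x ∈ P, 0 < x a
  bounded : ∀ a, ∃ m : ℝ≥0, ∀ x ∈ P, x a ≤ (m : ℝ≥0∞)

/-- The web I_x = {a ∈ I | ∃ε>0, x + ε·e_a ∈ P} of the local PCS at x. -/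
def locWeb {I : Type*} [DecidableEq I] (P : Set (I → ℝ≥0∞)) (x : I → ℝ≥0∞) : Set I :=
  {a | ∃ ε : ℝ≥0, 0 < ε ∧ x + Pi.single a (ε : ℝ≥0∞) ∈ P}

/-- Extension by 0 of a family indexed by S ⊆ I to a family indexed by I. -/
def extendZero {I : Type*} (S : Set I) (u : ↥S → ℝ≥0∞) : I → ℝ≥0∞ :=
  Function.extend Subtype.val u 0

/-- P_x = {u ∈ [0,∞)^{I_x} | x + u ∈ P} (u extended by 0 outside I_x). -/
def locPcs {I : Type*} [DecidableEq I] (P : Set (I → ℝ≥0∞)) (x : I → ℝ≥0∞) :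
    Set (↥(locWeb P x) → ℝ≥0∞) :=
  {u | x + extendZero (locWeb P x) u ∈ P}

/-- (I_x, P_x) is a probabilistic coherence space (the local PCS of X at x), and every
u with x + u ∈ P vanishes outside I_x. -/
lemma dotE_comm {I : Type*} (u v : I → ℝ≥0∞) : dotE u v = dotE v u :=
  tsum_congr fun i => mul_comm _ _

lemma dotE_add {I : Type*} (u u' v : I → ℝ≥0∞) :
    dotE (u + u') v = dotE u v + dotE u' v := by
  unfold dotE
  rw [← ENNReal.tsum_add]
  exact tsum_congr fun i => add_mul _ _ _

lemma dotE_mono_left {I : Type*} {u u' : I → ℝ≥0∞} (v : I → ℝ≥0∞) (h : u ≤ u') :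
    dotE u v ≤ dotE u' v :=
  ENNReal.tsum_le_tsum fun i => mul_le_mul_left (h i) _

lemma dotE_single {I : Type*} [DecidableEq I] (a : I) (c : ℝ≥0∞) (v : I → ℝ≥0∞) :
    dotE (Pi.single a c) v = c * v a := by
  unfold dotE
  rw [tsum_eq_single a]
  · rw [Pi.single_eq_same]
  · intro b hb; rw [Pi.single_eq_of_ne hb, zero_mul]

lemma mem_biorth {I : Type*} {P : Set (I → ℝ≥0∞)} {u : I → ℝ≥0∞} (hu : u ∈ P) :
    u ∈ orthE (orthE P) := fun v hv => by rw [dotE_comm]; exact hv u hu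

lemma pcs_dcl {I : Type*} {P : Set (I → ℝ≥0∞)} (hP : orthE (orthE P) = P)
    {u u' : I → ℝ≥0∞} (h : u ≤ u') (hu' : u' ∈ P) : u ∈ P := by
  rw [← hP]
  intro v hv
  rw [dotE_comm]
  exact (dotE_mono_left v h).trans (hv u' hu')

lemma extendZero_apply {I : Type*} (S : Set I) (u : ↥S → ℝ≥0∞) (a : ↥S) :
    extendZero S u a = u a :=
  Subtype.val_injective.extend_apply u 0 a

lemma extendZero_apply_notMem {I : Type*} (S : Set I) (u : ↥S → ℝ≥0∞) {i : I}
    (h : i ∉ S) : extendZero S u i = 0 :=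
  Function.extend_apply' (f := (Subtype.val : ↥S → I)) u (0 : I → ℝ≥0∞) i
    (by rintro ⟨a, rfl⟩; exact h a.2)

lemma dotE_extendZero {I : Type*} (S : Set I) (u : ↥S → ℝ≥0∞) (v : I → ℝ≥0∞) :
    dotE (extendZero S u) v = ∑' a : ↥S, u a * v a := by
  unfold dotE
  rw [← tsum_subtype_eq_of_support_subset (s := S) (f := fun i => extendZero S u i * v i)]
  · exact tsum_congr fun a => by rw [extendZero_apply]
  · intro i hi
    by_contra h
    simp only [Function.mem_support] at hi
    exact hi (by rw [extendZero_apply_notMem S u h, zero_mul])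

theorem stmt7 {I : Type*} [Countable I] [DecidableEq I]
    (P : Set (I → ℝ≥0∞)) (hP : IsPCS P) (x : I → ℝ≥0∞) (hx : x ∈ P) :
    IsPCS (locPcs P x) ∧
      ∀ u : I → ℝ≥0∞, x + u ∈ P → ∀ a : I, a ∉ locWeb P x → u a = 0 := by
  set S := locWeb P x with hS
  constructor
  · constructor
    · -- biorth
      apply Set.Subset.antisymm
      · intro w hw
        show x + extendZero S w ∈ P
        rw [← hP.biorth]
        intro v hv
        rw [dotE_comm, dotE_add]
        have hxv : dotE x v ≤ 1 := hv x hx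
        set c := 1 - dotE x v with hc
        suffices h : dotE (extendZero S w) v ≤ c by
          calc dotE x v + dotE (extendZero S w) v ≤ dotE x v + c := add_le_add_right h _
            _ = 1 := add_tsub_cancel_of_le hxv
        rw [dotE_extendZero]
        by_cases hc0 : c = 0
        · have hxv1 : dotE x v = 1 := le_antisymm hxv (tsub_eq_zero_iff_le.mp hc0)
          have hvz : ∀ a : ↥S, v (a : I) = 0 := by
            rintro ⟨a, ε, hε, hmem⟩
            have h1 := hv _ hmem
            rw [dotE_add, dotE_single, hxv1] at h1
            have h2 : (ε : ℝ≥0∞) * v a ≤ 0 :=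
              (ENNReal.add_le_add_iff_left (a := (1 : ℝ≥0∞)) ENNReal.one_ne_top).mp
                (by simpa using h1)
            have h3 : (ε : ℝ≥0∞) * v a = 0 := le_antisymm h2 zero_le
            rcases mul_eq_zero.mp h3 with h4 | h4
            · exact absurd h4 (by exact_mod_cast hε.ne')
            · exact h4
          have : ∀ a : ↥S, w a * v (a : I) = 0 := fun a => by rw [hvz a, mul_zero]
          simp [this]
        · have hcle : c ≤ 1 := tsub_le_self
          have hctop : c ≠ ∞ := (hcle.trans_lt ENNReal.one_lt_top).ne
          have key : ∀ u : ↥S → ℝ≥0∞, dotE u (fun a => v (a : I) / c)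
              = (∑' a : ↥S, u a * v (a : I)) / c := by
            intro u
            unfold dotE
            rw [ENNReal.div_eq_inv_mul, ← ENNReal.tsum_mul_left]
            exact tsum_congr fun a => by
              simp only [ENNReal.div_eq_inv_mul]; ring
          have hv' : (fun a : ↥S => v (a : I) / c) ∈ orthE (locPcs P x) := by
            intro u hu
            have h1 := hv _ hu
            rw [dotE_add] at h1
            have h2 : dotE (extendZero S u) v ≤ c := ENNReal.le_sub_of_add_le_left (hxv.trans_lt ENNReal.one_lt_top).ne h1
            rw [key u, ← dotE_extendZero]
            exact (ENNReal.div_le_div_right h2 c).trans ENNReal.div_self_le_one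
          have hwv := hw _ hv'
          rw [dotE_comm, key w] at hwv
          calc ∑' a : ↥S, w a * v (a : I) ≤ 1 * c :=
              (ENNReal.div_le_iff hc0 hctop).mp hwv
            _ = c := one_mul c
      · intro w hw
        exact mem_biorth hw
    · -- nonzero
      rintro ⟨a, ha⟩
      obtain ⟨ε, hε, hmem⟩ := ha
      refine ⟨Pi.single ⟨a, ⟨ε, hε, hmem⟩⟩ (ε : ℝ≥0∞), ?_, ?_⟩
      · show x + extendZero S _ ∈ P
        have heq : extendZero S (Pi.single (⟨a, ⟨ε, hε, hmem⟩⟩ : ↥S) (ε : ℝ≥0∞))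
            = Pi.single a (ε : ℝ≥0∞) := by
          funext i
          by_cases hi : i ∈ S
          · have : i = ((⟨i, hi⟩ : ↥S) : I) := rfl
            rw [this, extendZero_apply]
            simp [Pi.single_apply, Subtype.ext_iff]
          · rw [extendZero_apply_notMem S _ hi,
              Pi.single_eq_of_ne (fun h : i = a => hi (h ▸ ⟨ε, hε, hmem⟩)) _]
        rw [heq]
        exact hmem
      · rw [Pi.single_eq_same]
        exact_mod_cast hε
    · -- bounded
      rintro a
      obtain ⟨m, hm⟩ := hP.bounded (a : I)
      refine ⟨m, fun u hu => ?_⟩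
      have h1 := hm _ hu
      calc u a = extendZero S u (a : I) := (extendZero_apply S u a).symm
        _ ≤ x (a : I) + extendZero S u (a : I) := le_add_self
        _ ≤ (m : ℝ≥0∞) := h1
  · -- vanishing outside locWeb
    intro u hu a ha
    by_contra h
    apply ha
    refine ⟨(min 1 (u a)).toNNReal, ?_, ?_⟩
    · rw [ENNReal.toNNReal_pos_iff]
      constructor
      · exact lt_min one_pos (pos_iff_ne_zero.mpr h)
      · exact (min_le_left _ _).trans_lt ENNReal.one_lt_top
    · have hcoe : ((min 1 (u a)).toNNReal : ℝ≥0∞) = min 1 (u a) :=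
        ENNReal.coe_toNNReal ((min_le_left _ _).trans_lt ENNReal.one_lt_top).ne
      apply pcs_dcl hP.biorth _ hu
      intro i
      simp only [Pi.add_apply]
      gcongr
      by_cases hia : i = a
      · subst hia
        rw [Pi.single_eq_same, hcoe]
        exact min_le_right _ _
      · rw [Pi.single_eq_of_ne hia]
        exact zero_le
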